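/- Let G be a topological group acting on a metric space (P,d), let K₁ ⊆ G be a compact symmetric subset (K₁ = K₁⁻¹) containing the identity, and set L := K₁K₁ \ interior(K₁). Let ε > 0, let B ⊆ P be a set of diameter at most ε, and let P₁ ⊆ B be a set such that d(k·x, x) ≥ 2ε for all x ∈ P₁ and k ∈ L. Then the relation S on P₁ defined by (x,y) ∈ S iff y = k·x for some k ∈ K₁ is an equivalence relation (reflexive, symmetric, and transitive). -/

import Mathlib

open Set Pointwise

/-- With `K₁` compact symmetric containing `e`, `L = K₁K₁ \ int(K₁)`,
`B` of diameter at most `ε`, and `P₁ ⊆ B` with `dist (k • x) x ≥ 2ε` for `x ∈ P₁`, `k ∈ L`,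
the relation `(x, y) ∈ S ↔ ∃ k ∈ K₁, y = k • x` is an equivalence relation on `P₁`. -/
theorem stmt1 {G P : Type*} [Group G] [TopologicalSpace G] [IsTopologicalGroup G]
    [MetricSpace P] [MulAction G P]
    (K₁ : Set G) (hK₁ : IsCompact K₁) (hsym : K₁⁻¹ = K₁) (he : (1 : G) ∈ K₁)
    (ε : ℝ) (hε : 0 < ε)
    (B : Set P) (hB : ∀ a ∈ B, ∀ b ∈ B, dist a b ≤ ε)
    (P₁ : Set P) (hP₁ : P₁ ⊆ B)
    (hL : ∀ x ∈ P₁, ∀ k ∈ (K₁ * K₁) \ interior K₁, 2 * ε ≤ dist (k • x) x) :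
    (∀ x ∈ P₁, ∃ k ∈ K₁, x = k • x) ∧
    (∀ x ∈ P₁, ∀ y ∈ P₁, (∃ k ∈ K₁, y = k • x) → ∃ k ∈ K₁, x = k • y) ∧
    (∀ x ∈ P₁, ∀ y ∈ P₁, ∀ z ∈ P₁,
      (∃ k ∈ K₁, y = k • x) → (∃ k ∈ K₁, z = k • y) → ∃ k ∈ K₁, z = k • x) := by
  refine ⟨fun x hx => ⟨1, he, (one_smul G x).symm⟩, ?_, ?_⟩
  · rintro x hx y hy ⟨k, hk, rfl⟩
    exact ⟨k⁻¹, hsym ▸ Set.inv_mem_inv.mpr hk, (inv_smul_smul k x).symm⟩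
  · rintro x hx y hy z hz ⟨k, hk, rfl⟩ ⟨k', hk', rfl⟩
    by_cases hmem : k' * k ∈ interior K₁
    · exact ⟨k' * k, interior_subset hmem, (mul_smul k' k x).symm⟩
    · exfalso
      have hkk : k' * k ∈ (K₁ * K₁) \ interior K₁ :=
        ⟨Set.mul_mem_mul hk' hk, hmem⟩
      have h2 := hL x hx (k' * k) hkk
      have hle : dist ((k' * k) • x) x ≤ ε := by
        rw [mul_smul]
        exact hB _ (hP₁ hz) _ (hP₁ hx)
      linarith
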